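/- For a gap-free law L in a game (A, Δ, P), a law L' is a gap-free reduction of L if and only if at least one of the following is true: (1) L is a vertex cover of the hypergraph (⋃Δ, S(P)) and L' is a vertex cover of the induced subgraph (L, S(P)^L); (2) there is an agent a ∈ A and a safable action d ∈ Δ_a^L such that L is a vertex cover of the hypergraph H^{a,d} and L' is a vertex cover of the induced subgraph (L, (E^{a,d})^L), where E^{a,d} is the edge set of H^{a,d}; (3) there is an agent a ∈ A and a safable action d ∈ Δ_a ∩ L such that L \ {d} is a vertex cover of the hypergraph H^{a,d} and L' is a vertex cover of the induced subgraph (L \ {d}, (E^{a,d})^{L \ {d}}). -/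
import Mathlib


namespace MAS

variable {A α : Type*}

/-- The set of profiles of an action family `Δ`: functions assigning to each
agent `a` an action in `Δ a`. -/
def Profiles (Δ : A → Set α) : Set (A → α) := {δ | ∀ a, δ a ∈ Δ a}

/-- The support set `S(δ)` of a profile `δ`. -/
def supp (δ : A → α) : Set α := Set.range δ

/-- A law in the game: a set of actions `L ⊆ ⋃ a, Δ a`. -/
def IsLaw (Δ : A → Set α) (L : Set α) : Prop := L ⊆ ⋃ a, Δ a

/-- The law-imposed action sets `Δ_a^L = Δ_a \ L`. -/
def lawActions (Δ : A → Set α) (L : Set α) : A → Set α := fun a => Δ a \ L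

/-- The law-imposed prohibition `P^L = P ∩ ∏ Δ^L`. -/
def lawProhib (Δ : A → Set α) (P : Set (A → α)) (L : Set α) : Set (A → α) :=
  P ∩ Profiles (lawActions Δ L)

/-- A law `L` is useful if `P^L = ∅` in the law-imposed game. -/
def Useful (Δ : A → Set α) (P : Set (A → α)) (L : Set α) : Prop :=
  lawProhib Δ P L = ∅

/-- An action `d` is a safe action of agent `a` in the game `(A, Δ, P)` if
`d ∈ Δ a` and `δ a ≠ d` for every prohibited profile `δ ∈ P`. -/
def SafeAction (Δ : A → Set α) (P : Set (A → α)) (a : A) (d : α) : Prop :=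
  d ∈ Δ a ∧ ∀ δ ∈ P, δ a ≠ d

/-- In a prohibited profile `δ ∈ P`, agent `a` is responsible under law `L` if
`δ a ∈ L` (legally), or `S(δ) ∩ L = ∅` and a safe action of agent `a` exists in
the law-imposed game (counterfactually). -/
def Responsible (Δ : A → Set α) (P : Set (A → α)) (L : Set α) (δ : A → α) (a : A) : Prop :=
  δ a ∈ L ∨ (supp δ ∩ L = ∅ ∧ ∃ d, SafeAction (lawActions Δ L) (lawProhib Δ P L) a d)

/-- A law `L` is gap-free if in each prohibited profile there is at least one
responsible agent. -/
def GapFree (Δ : A → Set α) (P : Set (A → α)) (L : Set α) : Prop :=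
  ∀ δ ∈ P, ∃ a, Responsible Δ P L δ a

/-- An action `d` is safable if there is a law `L` and an agent `a` such that
`d` is a safe action of agent `a` in the law-imposed game. -/
def Safable (Δ : A → Set α) (P : Set (A → α)) (d : α) : Prop :=
  ∃ L, IsLaw Δ L ∧ ∃ a, SafeAction (lawActions Δ L) (lawProhib Δ P L) a d

/-- `C` is a vertex cover of the hypergraph `(V, E)`. -/
def IsVC (V : Set α) (E : Set (Set α)) (C : Set α) : Prop :=
  C ⊆ V ∧ ∀ e ∈ E, (C ∩ e).Nonempty

/-- A minimal vertex cover. -/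
def MinimalVC (V : Set α) (E : Set (Set α)) (C : Set α) : Prop :=
  IsVC V E C ∧ ∀ C', C' ⊂ C → ¬ IsVC V E C'

/-- A minimal gap-free law: a gap-free law no strict subset of which is gap-free. -/
def MinimalGapFree (Δ : A → Set α) (P : Set (A → α)) (L : Set α) : Prop :=
  GapFree Δ P L ∧ ∀ L', L' ⊂ L → ¬ GapFree Δ P L'

/-- `S(P) = {S(δ) : δ ∈ P}`. -/
def suppSet (P : Set (A → α)) : Set (Set α) := (fun δ => supp δ) '' P

/-- The edge set `E^C = {C ∩ e : e ∈ E}` of the induced subgraph. -/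
def inducedEdges (E : Set (Set α)) (C : Set α) : Set (Set α) := (fun e => C ∩ e) '' E

/-- The vertex set `(⋃ Δ) \ {d}` of the hypergraph `H^{a,d}`. -/
def Hvertices (Δ : A → Set α) (d : α) : Set α := (⋃ a, Δ a) \ {d}

/-- The edge set `{S(δ) \ {d} : δ ∈ P, δ a = d}` of the hypergraph `H^{a,d}`. -/
def Hedges (P : Set (A → α)) (a : A) (d : α) : Set (Set α) :=
  (fun δ => supp δ \ {d}) '' {δ ∈ P | δ a = d}

lemma safe_iff' {A α : Type*} (Δ : A → Set α) (P : Set (A → α)) (hP : P ⊆ Profiles Δ)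
    (M : Set α) (a : A) (d : α) :
    SafeAction (lawActions Δ M) (lawProhib Δ P M) a d ↔
      d ∈ Δ a ∧ d ∉ M ∧ ∀ δ ∈ P, δ a = d → (M ∩ supp δ).Nonempty := by
  constructor
  · rintro ⟨⟨hd, hdM⟩, hsafe⟩
    refine ⟨hd, hdM, fun δ hδ hda => ?_⟩
    by_contra hne
    exact hsafe δ ⟨hδ, fun b => ⟨hP hδ b, fun hb => hne ⟨δ b, hb, ⟨b, rfl⟩⟩⟩⟩ hda
  · rintro ⟨hd, hdM, hcov⟩
    refine ⟨⟨hd, hdM⟩, fun δ hδ hda => ?_⟩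
    obtain ⟨x, hxM, b, rfl⟩ := hcov δ hδ.1 hda
    exact (hδ.2 b).2 hxM

lemma gapFree_iff' {A α : Type*} (Δ : A → Set α) (P : Set (A → α)) (hP : P ⊆ Profiles Δ)
    (M : Set α) :
    GapFree Δ P M ↔
      (∀ δ ∈ P, (M ∩ supp δ).Nonempty) ∨
        ∃ a d, d ∈ Δ a ∧ d ∉ M ∧ ∀ δ ∈ P, δ a = d → (M ∩ supp δ).Nonempty := by
  constructor
  · intro h
    by_cases hc : ∀ δ ∈ P, (M ∩ supp δ).Nonempty
    · exact Or.inl hc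
    · push_neg at hc
      obtain ⟨δ, hδP, hδe⟩ := hc
      obtain ⟨a, ha⟩ := h δ hδP
      rcases ha with hmem | ⟨_, d, hd⟩
      · exact absurd hδe (Set.nonempty_iff_ne_empty.1 ⟨δ a, hmem, a, rfl⟩)
      · exact Or.inr ⟨a, d, (safe_iff' Δ P hP M a d).1 hd⟩
  · rintro (hcov | ⟨a, d, hd⟩) δ hδP
    · obtain ⟨x, hxM, b, rfl⟩ := hcov δ hδP
      exact ⟨b, Or.inl hxM⟩
    · by_cases hme : (M ∩ supp δ).Nonempty
      · obtain ⟨x, hxM, b, rfl⟩ := hme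
        exact ⟨b, Or.inl hxM⟩
      · refine ⟨a, Or.inr ⟨?_, d, (safe_iff' Δ P hP M a d).2 hd⟩⟩
        rw [Set.inter_comm]
        exact Set.not_nonempty_iff_eq_empty.1 hme

lemma inducedVC_iff' {α : Type*} (E : Set (Set α)) (C C' : Set α) :
    IsVC C (inducedEdges E C) C' ↔ C' ⊆ C ∧ ∀ e ∈ E, (C' ∩ e).Nonempty := by
  constructor
  · rintro ⟨hsub, hcov⟩
    refine ⟨hsub, fun e he => ?_⟩
    obtain ⟨x, hx1, hx2⟩ := hcov _ ⟨e, he, rfl⟩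
    exact ⟨x, hx1, hx2.2⟩
  · rintro ⟨hsub, hcov⟩
    refine ⟨hsub, ?_⟩
    rintro e ⟨e', he', rfl⟩
    obtain ⟨x, hx1, hx2⟩ := hcov e' he'
    exact ⟨x, hx1, hsub hx1, hx2⟩

lemma mem_singleton_ne' {α : Type*} {x d : α} {M : Set α} (hx : x ∈ M) (hdM : d ∉ M) :
    x ∉ ({d} : Set α) := fun hxd => hdM (Set.mem_singleton_iff.1 hxd ▸ hx)

/-- For a gap-free law `L` in a game `(A, Δ, P)`, a law `L'` is a
gap-free reduction of `L` if and only if (1) `L` is a vertex cover of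
`(⋃Δ, S(P))` and `L'` is a vertex cover of the induced subgraph `(L, S(P)^L)`;
or (2) there is an agent `a ∈ A` and a safable action `d ∈ Δ_a^L` such that `L`
is a vertex cover of `H^{a,d}` and `L'` is a vertex cover of the induced
subgraph `(L, (E^{a,d})^L)`; or (3) there is an agent `a ∈ A` and a safable
action `d ∈ Δ_a ∩ L` such that `L \ {d}` is a vertex cover of `H^{a,d}` and
`L'` is a vertex cover of the induced subgraph `(L \ {d}, (E^{a,d})^{L \ {d}})`. -/
theorem gapFreeReduction_iff_isVC {A α : Type*} [Fintype A] [Nonempty A]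
    (Δ : A → Set α) (P : Set (A → α))
    (hΔfin : ∀ a, (Δ a).Finite) (hP : P ⊆ Profiles Δ)
    (L : Set α) (hL : IsLaw Δ L) (hgf : GapFree Δ P L)
    (L' : Set α) (hL' : IsLaw Δ L') :
    (L' ⊆ L ∧ GapFree Δ P L') ↔
      ((IsVC (⋃ a, Δ a) (suppSet P) L ∧
          IsVC L (inducedEdges (suppSet P) L) L') ∨
        (∃ a, ∃ d ∈ lawActions Δ L a, Safable Δ P d ∧
          IsVC (Hvertices Δ d) (Hedges P a d) L ∧
            IsVC L (inducedEdges (Hedges P a d) L) L') ∨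
        (∃ a, ∃ d ∈ Δ a ∩ L, Safable Δ P d ∧
          IsVC (Hvertices Δ d) (Hedges P a d) (L \ {d}) ∧
            IsVC (L \ {d}) (inducedEdges (Hedges P a d) (L \ {d})) L')) := by
  constructor
  · rintro ⟨hsub, hgf'⟩
    rcases (gapFree_iff' Δ P hP L').1 hgf' with hcov | ⟨a, d, hdΔ, hdL', hcov⟩
    · left
      constructor
      · refine ⟨hL, ?_⟩
        rintro e ⟨δ, hδ, rfl⟩
        obtain ⟨x, h1, h2⟩ := hcov δ hδ
        exact ⟨x, hsub h1, h2⟩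
      · refine (inducedVC_iff' _ _ _).2 ⟨hsub, ?_⟩
        rintro e ⟨δ, hδ, rfl⟩
        exact hcov δ hδ
    · have hsafable : Safable Δ P d :=
        ⟨L', hL', a, (safe_iff' Δ P hP L' a d).2 ⟨hdΔ, hdL', hcov⟩⟩
      by_cases hdL : d ∈ L
      · right; right
        refine ⟨a, d, ⟨hdΔ, hdL⟩, hsafable, ?_, ?_⟩
        · refine ⟨fun x hx => ⟨hL hx.1, hx.2⟩, ?_⟩
          rintro e ⟨δ, ⟨hδ, hda⟩, rfl⟩
          obtain ⟨x, h1, h2⟩ := hcov δ hδ hda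
          exact ⟨x, ⟨hsub h1, mem_singleton_ne' h1 hdL'⟩, h2, mem_singleton_ne' h1 hdL'⟩
        · refine (inducedVC_iff' _ _ _).2
            ⟨fun x hx => ⟨hsub hx, mem_singleton_ne' hx hdL'⟩, ?_⟩
          rintro e ⟨δ, ⟨hδ, hda⟩, rfl⟩
          obtain ⟨x, h1, h2⟩ := hcov δ hδ hda
          exact ⟨x, h1, h2, mem_singleton_ne' h1 hdL'⟩
      · right; left
        refine ⟨a, d, ⟨hdΔ, hdL⟩, hsafable, ?_, ?_⟩
        · refine ⟨fun x hx => ⟨hL hx, mem_singleton_ne' hx hdL⟩, ?_⟩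
          rintro e ⟨δ, ⟨hδ, hda⟩, rfl⟩
          obtain ⟨x, h1, h2⟩ := hcov δ hδ hda
          exact ⟨x, hsub h1, h2, mem_singleton_ne' h1 hdL'⟩
        · refine (inducedVC_iff' _ _ _).2 ⟨hsub, ?_⟩
          rintro e ⟨δ, ⟨hδ, hda⟩, rfl⟩
          obtain ⟨x, h1, h2⟩ := hcov δ hδ hda
          exact ⟨x, h1, h2, mem_singleton_ne' h1 hdL'⟩
  · rintro (⟨_, hVC'⟩ | ⟨a, d, ⟨hdΔ, hdL⟩, _, _, hVC'⟩ | ⟨a, d, ⟨hdΔ, hdL⟩, _, _, hVC'⟩)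
    · obtain ⟨hsub, hcov⟩ := (inducedVC_iff' _ _ _).1 hVC'
      exact ⟨hsub, (gapFree_iff' Δ P hP L').2 (Or.inl fun δ hδ => hcov _ ⟨δ, hδ, rfl⟩)⟩
    · obtain ⟨hsub, hcov⟩ := (inducedVC_iff' _ _ _).1 hVC'
      have hdL'' : d ∉ L' := fun h => hdL (hsub h)
      refine ⟨hsub, (gapFree_iff' Δ P hP L').2 (Or.inr ⟨a, d, hdΔ, hdL'', ?_⟩)⟩
      intro δ hδ hda
      obtain ⟨x, h1, h2⟩ := hcov _ ⟨δ, ⟨hδ, hda⟩, rfl⟩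
      exact ⟨x, h1, h2.1⟩
    · obtain ⟨hsub, hcov⟩ := (inducedVC_iff' _ _ _).1 hVC'
      have hsub' : L' ⊆ L := fun x hx => (hsub hx).1
      have hdL'' : d ∉ L' := fun h => (hsub h).2 rfl
      refine ⟨hsub', (gapFree_iff' Δ P hP L').2 (Or.inr ⟨a, d, hdΔ, hdL'', ?_⟩)⟩
      intro δ hδ hda
      obtain ⟨x, h1, h2⟩ := hcov _ ⟨δ, ⟨hδ, hda⟩, rfl⟩
      exact ⟨x, h1, h2.1⟩

end MAS
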